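/- For every natural number n ≥ 1 and every real number r ≠ 0, the function s ↦ R_{n-1}(s) / s^{2n-1} is differentiable at r with derivative equal to -R_n(r) / r^{2n}. -/

import Mathlib

open MeasureTheory intervalIntegral

/-- Hermite's integral `R_n(s) = ∫_0^s ((s² - x²)ⁿ / (2ⁿ n!)) cos x dx`. -/
noncomputable def R (n : ℕ) (s : ℝ) : ℝ :=
  ∫ x in (0:ℝ)..s, ((s ^ 2 - x ^ 2) ^ n / (2 ^ n * n.factorial)) * Real.cos x

/-- Rescaled version of `R`: `g n s = ∫_0^1 ((1-t²)ⁿ/(2ⁿ n!)) cos (s t) dt`. -/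
noncomputable def g (n : ℕ) (s : ℝ) : ℝ :=
  ∫ t in (0:ℝ)..1, ((1 - t ^ 2) ^ n / (2 ^ n * n.factorial)) * Real.cos (s * t)

lemma R_eq (n : ℕ) (s : ℝ) : R n s = s ^ (2 * n + 1) * g n s := by
  have h := intervalIntegral.smul_integral_comp_mul_left
    (f := fun x => ((s ^ 2 - x ^ 2) ^ n / (2 ^ n * n.factorial)) * Real.cos x)
    (a := (0:ℝ)) (b := 1) s
  rw [mul_zero, mul_one] at h
  have hcong : ∀ t : ℝ, ((s ^ 2 - (s * t) ^ 2) ^ n / (2 ^ n * n.factorial)) * Real.cos (s * t)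
      = s ^ (2 * n) * (((1 - t ^ 2) ^ n / (2 ^ n * n.factorial)) * Real.cos (s * t)) := by
    intro t
    have hb : s ^ 2 - (s * t) ^ 2 = s ^ 2 * (1 - t ^ 2) := by ring
    rw [hb, mul_pow, ← pow_mul]
    ring
  rw [R, ← h, smul_eq_mul]
  simp only [hcong]
  rw [intervalIntegral.integral_const_mul, g]
  ring

lemma g_cont (n : ℕ) (s : ℝ) :
    Continuous fun t : ℝ => ((1 - t ^ 2) ^ n / (2 ^ n * n.factorial)) * Real.cos (s * t) := by
  fun_prop

lemma g_deriv (n : ℕ) (r : ℝ) : HasDerivAt (g n) (-(r * g (n + 1) r)) r := by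
  set c : ℝ := 2 ^ n * n.factorial with hc
  have hc0 : (0:ℝ) < c := by positivity
  -- differentiation under the integral sign
  have key := intervalIntegral.hasDerivAt_integral_of_dominated_loc_of_deriv_le
    (F := fun x t => ((1 - t ^ 2) ^ n / c) * Real.cos (x * t))
    (F' := fun x t => -(((1 - t ^ 2) ^ n / c) * (Real.sin (x * t) * t)))
    (x₀ := r) (a := (0:ℝ)) (b := 1) (μ := volume) (bound := fun _ => 1 / c)
    (s := Metric.ball r 1) (Metric.ball_mem_nhds r one_pos)
    (by
      filter_upwards with x
      exact ((g_cont n x)).aestronglyMeasurable)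
    ((g_cont n r).intervalIntegrable 0 1)
    (by
      apply Continuous.aestronglyMeasurable
      fun_prop)
    (by
      filter_upwards with t ht x _
      rw [Set.uIoc_of_le (by norm_num : (0:ℝ) ≤ 1)] at ht
      have ht0 : 0 < t := ht.1
      have ht1 : t ≤ 1 := ht.2
      have h1 : |1 - t ^ 2| ≤ 1 := by
        rw [abs_le]; constructor <;> nlinarith
      have h1n : |(1 - t ^ 2) ^ n| ≤ 1 := by
        rw [abs_pow]; exact pow_le_one₀ (abs_nonneg _) h1
      have hsin : |Real.sin (x * t)| ≤ 1 := Real.abs_sin_le_one _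
      have ht' : |t| ≤ 1 := by rw [abs_of_pos ht0]; exact ht1
      have : |(-(((1 - t ^ 2) ^ n / c) * (Real.sin (x * t) * t)))|
          = |(1 - t ^ 2) ^ n| / c * (|Real.sin (x * t)| * |t|) := by
        rw [abs_neg, abs_mul, abs_mul, abs_div, abs_of_pos hc0]
      rw [Real.norm_eq_abs, this]
      calc |(1 - t ^ 2) ^ n| / c * (|Real.sin (x * t)| * |t|)
          ≤ 1 / c * (1 * 1) := by
            apply mul_le_mul _ _ (by positivity) (by positivity)
            · gcongr
            · exact mul_le_mul hsin ht' (abs_nonneg _) zero_le_one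
        _ = 1 / c := by ring)
    (by apply Continuous.intervalIntegrable; fun_prop)
    (by
      filter_upwards with t _ x _
      have h1 : HasDerivAt (fun x : ℝ => x * t) t x := hasDerivAt_mul_const t
      have h2 : HasDerivAt (fun x : ℝ => Real.cos (x * t)) (-Real.sin (x * t) * t) x :=
        (Real.hasDerivAt_cos (x * t)).comp (h := fun x : ℝ => x * t) x h1
      have h3 := h2.const_mul ((1 - t ^ 2) ^ n / c)
      convert h3 using 1
      · rfl
      ring)
  -- identify the derivative integral via integration by parts (FTC)
  have hval : (∫ t in (0:ℝ)..1, -(((1 - t ^ 2) ^ n / c) * (Real.sin (r * t) * t)))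
      = -(r * g (n + 1) r) := by
    set c' : ℝ := 2 ^ (n + 1) * (n + 1).factorial with hc'
    have hc'0 : (0:ℝ) < c' := by positivity
    set Φ : ℝ → ℝ := fun t => ((1 - t ^ 2) ^ (n + 1) / c') * Real.sin (r * t) with hΦ
    set Φ' : ℝ → ℝ := fun t =>
      ((↑(n + 1) * (1 - t ^ 2) ^ n * (-(2 * t))) / c') * Real.sin (r * t)
        + ((1 - t ^ 2) ^ (n + 1) / c') * (Real.cos (r * t) * r) with hΦ'
    have hderiv : ∀ t ∈ Set.uIcc (0:ℝ) 1, HasDerivAt Φ (Φ' t) t := by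
      intro t _
      have hu : HasDerivAt (fun t : ℝ => 1 - t ^ 2) (-(2 * t)) t := by
        simpa using ((hasDerivAt_pow 2 t).const_sub 1)
      have hu' : HasDerivAt (fun t : ℝ => (1 - t ^ 2) ^ (n + 1))
          (↑(n + 1) * (1 - t ^ 2) ^ n * (-(2 * t))) t := by
        simpa using hu.fun_pow (n + 1)
      have hrt : HasDerivAt (fun t : ℝ => r * t) r t := by
        simpa using (hasDerivAt_id t).const_mul r
      have hs : HasDerivAt (fun t : ℝ => Real.sin (r * t)) (Real.cos (r * t) * r) t :=
        (Real.hasDerivAt_sin (r * t)).comp (h := fun t : ℝ => r * t) t hrt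
      have := (hu'.div_const c').fun_mul hs
      convert this using 1
    have hint : IntervalIntegrable Φ' volume 0 1 := by
      apply Continuous.intervalIntegrable
      fun_prop
    have hFTC := intervalIntegral.integral_eq_sub_of_hasDerivAt hderiv hint
    have hΦ1 : Φ 1 = 0 := by simp [hΦ]
    have hΦ0 : Φ 0 = 0 := by simp [hΦ]
    rw [hΦ1, hΦ0, sub_zero] at hFTC
    -- Φ' t = -(first integrand) ... relate
    have split : ∀ t : ℝ, -(((1 - t ^ 2) ^ n / c) * (Real.sin (r * t) * t))
        = Φ' t - r * (((1 - t ^ 2) ^ (n + 1) / c') * Real.cos (r * t)) := by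
      intro t
      simp only [hΦ']
      have hfac : c' = 2 * (↑(n + 1)) * c := by
        simp only [hc, hc', Nat.factorial_succ]
        push_cast
        ring
      field_simp [hfac, hc0.ne']
      rw [hfac]; push_cast; ring
    rw [intervalIntegral.integral_congr (fun t _ => split t),
      intervalIntegral.integral_sub hint (by
        apply Continuous.intervalIntegrable; fun_prop), hFTC]
    rw [intervalIntegral.integral_const_mul]
    simp only [g, hc']
    ring
  rw [hval] at key
  exact key.2

theorem R_quotient_deriv (n : ℕ) (hn : 1 ≤ n) (r : ℝ) (hr : r ≠ 0) :
    HasDerivAt (fun s : ℝ => R (n - 1) s / s ^ (2 * n - 1)) (-(R n r) / r ^ (2 * n)) r := by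
  obtain ⟨m, rfl⟩ : ∃ m, n = m + 1 := ⟨n - 1, (Nat.succ_pred_eq_of_pos hn).symm⟩
  have hm1 : m + 1 - 1 = m := rfl
  have hexp : 2 * (m + 1) - 1 = 2 * m + 1 := by omega
  have hg := g_deriv m r
  have heq : (fun s : ℝ => R (m + 1 - 1) s / s ^ (2 * (m + 1) - 1)) =ᶠ[nhds r] g m := by
    filter_upwards [isOpen_compl_singleton.mem_nhds (by simpa using hr : r ∈ ({0}ᶜ : Set ℝ))]
      with s hs
    have hs0 : s ≠ 0 := hs
    rw [hm1, hexp, R_eq m s, pow_succ]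
    field_simp
  have hD : -(R (m + 1) r) / r ^ (2 * (m + 1)) = -(r * g (m + 1) r) := by
    rw [R_eq (m + 1) r, pow_succ]
    field_simp
  rw [hD]
  exact hg.congr_of_eventuallyEq heq
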